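/- Let W > 0, λ > 0, and m ∈ (0,1]. Suppose u : ℝ → ℝ is continuously differentiable on [0,1], twice differentiable on (0,1) with u''(x) = λ/(2·(1+u(x)+W)²) for all x ∈ (0,1), and satisfies u(0) = −m, u'(0) = 0, u(1) = 0, and u(x) ≥ −m for x ∈ [0,1]. Then λ = (1+W)³·φ(m/(1+W))². -/

import Mathlib

/-- `φ(r) = √(r(1−r)) + (1−r)^{3/2}·log(1+√r) − (1/2)(1−r)^{3/2}·log(1−r)`. -/
noncomputable def phi (r : ℝ) : ℝ :=
  Real.sqrt (r * (1 - r)) + (1 - r) ^ ((3 : ℝ) / 2) * Real.log (1 + Real.sqrt r)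
    - (1 / 2) * (1 - r) ^ ((3 : ℝ) / 2) * Real.log (1 - r)

/-- `Λ_*(W) = (1+W)³·φ(1/(1+W))²`. -/
noncomputable def LambdaStar (W : ℝ) : ℝ := (1 + W) ^ 3 * (phi (1 / (1 + W))) ^ 2

open Real Set

lemma constOn01 {f : ℝ → ℝ} (hc : ContinuousOn f (Set.Icc 0 1))
    (hd : ∀ x ∈ Set.Ioo (0:ℝ) 1, HasDerivAt f 0 x) :
    ∀ x ∈ Set.Icc (0:ℝ) 1, f x = f 0 := by
  have hD : DifferentiableOn ℝ f (interior (Set.Icc (0:ℝ) 1)) := by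
    rw [interior_Icc]
    exact fun x hx => (hd x hx).differentiableAt.differentiableWithinAt
  have h0 : ∀ x ∈ interior (Set.Icc (0:ℝ) 1), deriv f x = 0 := by
    rw [interior_Icc]; exact fun x hx => (hd x hx).deriv
  have hmono := monotoneOn_of_deriv_nonneg (convex_Icc 0 1) hc hD (fun x hx => (h0 x hx).ge)
  have hanti := antitoneOn_of_deriv_nonpos (convex_Icc 0 1) hc hD (fun x hx => (h0 x hx).le)
  intro x hx
  have h0m : (0:ℝ) ∈ Set.Icc (0:ℝ) 1 := by norm_num
  exact le_antisymm (hanti h0m hx hx.1) (hmono h0m hx hx.1)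

noncomputable def Gfun (a s : ℝ) : ℝ :=
  Real.sqrt (s * (s - a)) + a * Real.log (Real.sqrt s + Real.sqrt (s - a))

lemma hasDerivAt_Gfun {a s : ℝ} (ha : 0 < a) (hs : a < s) :
    HasDerivAt (Gfun a) (Real.sqrt s / Real.sqrt (s - a)) s := by
  have hs0 : 0 < s := ha.trans hs
  have hsa : 0 < s - a := sub_pos.2 hs
  have hp : 0 < Real.sqrt s := Real.sqrt_pos.2 hs0
  have hq : 0 < Real.sqrt (s - a) := Real.sqrt_pos.2 hsa
  have hp2 : Real.sqrt s ^ 2 = s := Real.sq_sqrt hs0.le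
  have hq2 : Real.sqrt (s - a) ^ 2 = s - a := Real.sq_sqrt hsa.le
  have h1 : HasDerivAt (fun t : ℝ => t * (t - a)) (1 * (s - a) + s * 1) s :=
    (hasDerivAt_id s).mul ((hasDerivAt_id s).sub_const a)
  have h2 := h1.sqrt (mul_pos hs0 hsa).ne'
  have h3 : HasDerivAt (fun t : ℝ => Real.sqrt t + Real.sqrt (t - a))
      (1 / (2 * Real.sqrt s) + 1 / (2 * Real.sqrt (s - a))) s := by
    have h3a := (hasDerivAt_id s).sqrt hs0.ne'
    have h3b := ((hasDerivAt_id s).sub_const a).sqrt hsa.ne'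
    refine (h3a.add h3b).congr_deriv ?_
    simp
  have h4 := (h3.log (by positivity)).const_mul a
  have h5 := h2.add h4
  refine h5.congr_deriv ?_
  rw [Real.sqrt_mul hs0.le]
  set p := Real.sqrt s with hpdef
  set q := Real.sqrt (s - a) with hqdef
  have ha3 : a = p ^ 2 - q ^ 2 := by rw [hp2, hq2]; ring
  rw [← hq2, ← hp2, ha3]
  have hpq : 0 < p + q := by positivity
  field_simp
  ring

/-- Necessary condition for the unzipped shooting problem: `λ = (1+W)³·φ(m/(1+W))²`. -/
theorem stmt_6 (W lam m : ℝ) (hW : 0 < W) (hlam : 0 < lam)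
    (hm : m ∈ Set.Ioc (0 : ℝ) 1)
    (u u' : ℝ → ℝ)
    (hu : ∀ x ∈ Set.Icc (0 : ℝ) 1, HasDerivWithinAt u (u' x) (Set.Icc (0 : ℝ) 1) x)
    (hu'c : ContinuousOn u' (Set.Icc (0 : ℝ) 1))
    (hu'' : ∀ x ∈ Set.Ioo (0 : ℝ) 1, HasDerivAt u' (lam / (2 * (1 + u x + W) ^ 2)) x)
    (hu0 : u 0 = -m) (hu'0 : u' 0 = 0) (hu1 : u 1 = 0)
    (hge : ∀ x ∈ Set.Icc (0 : ℝ) 1, u x ≥ -m) :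
    lam = (1 + W) ^ 3 * (phi (m / (1 + W))) ^ 2 := by
  obtain ⟨hm0, hm1⟩ := hm
  set b : ℝ := 1 + W with hb_def
  set a : ℝ := 1 - m + W with ha_def
  have hb : 0 < b := by rw [hb_def]; linarith
  have ha : 0 < a := by rw [ha_def]; linarith
  have hab : a < b := by rw [ha_def, hb_def]; linarith
  have hba : b - a = m := by rw [ha_def, hb_def]; ring
  have h0I : (0:ℝ) ∈ Set.Icc (0:ℝ) 1 := by norm_num
  have h1I : (1:ℝ) ∈ Set.Icc (0:ℝ) 1 := by norm_num
  have hs_lb : ∀ x ∈ Set.Icc (0:ℝ) 1, a ≤ 1 + u x + W := by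
    intro x hx; have := hge x hx; rw [ha_def]; linarith
  have hs_pos : ∀ x ∈ Set.Icc (0:ℝ) 1, 0 < 1 + u x + W :=
    fun x hx => lt_of_lt_of_le ha (hs_lb x hx)
  have huc : ContinuousOn u (Set.Icc (0:ℝ) 1) := fun x hx => (hu x hx).continuousWithinAt
  -- u' is strictly increasing
  have hu'mono : StrictMonoOn u' (Set.Icc (0:ℝ) 1) := by
    apply strictMonoOn_of_deriv_pos (convex_Icc 0 1) hu'c
    rw [interior_Icc]
    intro x hx
    rw [(hu'' x hx).deriv]
    have := hs_pos x ⟨hx.1.le, hx.2.le⟩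
    positivity
  have hu'pos : ∀ x ∈ Set.Ioc (0:ℝ) 1, 0 < u' x := by
    intro x hx
    have := hu'mono h0I ⟨hx.1.le, hx.2⟩ hx.1
    rwa [hu'0] at this
  -- u is strictly increasing
  have humono : StrictMonoOn u (Set.Icc (0:ℝ) 1) := by
    apply strictMonoOn_of_deriv_pos (convex_Icc 0 1) huc
    rw [interior_Icc]
    intro x hx
    have hxI : x ∈ Set.Icc (0:ℝ) 1 := ⟨hx.1.le, hx.2.le⟩
    have hD : HasDerivAt u (u' x) x := (hu x hxI).hasDerivAt (Icc_mem_nhds hx.1 hx.2)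
    rw [hD.deriv]; exact hu'pos x ⟨hx.1, hx.2.le⟩
  have hu_gt : ∀ x ∈ Set.Ioc (0:ℝ) 1, -m < u x := by
    intro x hx
    have := humono h0I ⟨hx.1.le, hx.2⟩ hx.1
    rwa [hu0] at this
  -- energy identity
  set E : ℝ → ℝ := fun x => u' x ^ 2 / 2 + lam / 2 * (1 + u x + W)⁻¹ with hE_def
  have hEc : ContinuousOn E (Set.Icc (0:ℝ) 1) := by
    apply ContinuousOn.add ((hu'c.pow 2).div_const 2)
    exact (((continuousOn_const.add huc).add continuousOn_const).inv₀
      (fun x hx => (hs_pos x hx).ne')).const_smul (lam / 2)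
  have hEd : ∀ x ∈ Set.Ioo (0:ℝ) 1, HasDerivAt E 0 x := by
    intro x hx
    have hxI : x ∈ Set.Icc (0:ℝ) 1 := ⟨hx.1.le, hx.2.le⟩
    have hux : HasDerivAt u (u' x) x := (hu x hxI).hasDerivAt (Icc_mem_nhds hx.1 hx.2)
    have hs' : HasDerivAt (fun y => 1 + u y + W) (u' x) x := (hux.const_add 1).add_const W
    have h1 := ((hu'' x hx).pow 2).div_const 2
    have h4 := (hs'.inv (hs_pos x hxI).ne').const_mul (lam / 2)
    have h5 := h1.add h4
    refine h5.congr_deriv ?_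
    have hsx := hs_pos x hxI
    field_simp
    ring
  have hEconst := constOn01 hEc hEd
  have hE : ∀ x ∈ Set.Icc (0:ℝ) 1, u' x ^ 2 = lam / a - lam / (1 + u x + W) := by
    intro x hx
    have h := hEconst x hx
    rw [hE_def] at h
    simp only [hu0, hu'0] at h
    have e0 : (1:ℝ) + -m + W = a := by rw [ha_def]; ring
    rw [e0] at h
    have hsx := hs_pos x hx
    field_simp at h ⊢
    nlinarith [h]
  -- the main comparison function
  set A := Real.sqrt a with hA_def
  have hA : 0 < A := Real.sqrt_pos.2 ha
  set H : ℝ → ℝ := fun x => A * Gfun a (1 + u x + W) - Real.sqrt lam * x with hH_def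
  have hvC : ContinuousOn (fun x => 1 + u x + W) (Set.Icc (0:ℝ) 1) :=
    (continuousOn_const.add huc).add continuousOn_const
  have hHc : ContinuousOn H (Set.Icc (0:ℝ) 1) := by
    apply ContinuousOn.sub _ (continuousOn_const.mul continuousOn_id)
    apply ContinuousOn.const_smul _ A
    unfold Gfun
    apply ContinuousOn.add
    · exact Real.continuous_sqrt.comp_continuousOn (hvC.mul (hvC.sub continuousOn_const))
    · apply ContinuousOn.mul continuousOn_const
      apply ContinuousOn.log
      · exact (Real.continuous_sqrt.comp_continuousOn hvC).add
          (Real.continuous_sqrt.comp_continuousOn (hvC.sub continuousOn_const))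
      · intro x hx
        have h1 : Real.sqrt a ≤ Real.sqrt (1 + u x + W) := Real.sqrt_le_sqrt (hs_lb x hx)
        have h2 : 0 ≤ Real.sqrt (1 + u x + W - a) := Real.sqrt_nonneg _
        have h3 : 0 < A := hA
        rw [hA_def] at h3
        exact ne_of_gt (by linarith)
  have hHd : ∀ x ∈ Set.Ioo (0:ℝ) 1, HasDerivAt H 0 x := by
    intro x hx
    have hxI : x ∈ Set.Icc (0:ℝ) 1 := ⟨hx.1.le, hx.2.le⟩
    have hux : HasDerivAt u (u' x) x := (hu x hxI).hasDerivAt (Icc_mem_nhds hx.1 hx.2)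
    have hs' : HasDerivAt (fun y => 1 + u y + W) (u' x) x := (hux.const_add 1).add_const W
    set s := 1 + u x + W with hs_def
    have hsgta : a < s := by
      rw [hs_def, ha_def]
      have := hu_gt x ⟨hx.1, hx.2.le⟩
      linarith
    have hs0 : 0 < s := ha.trans hsgta
    have hsa : 0 < s - a := sub_pos.2 hsgta
    have hG : HasDerivAt (Gfun a) (Real.sqrt s / Real.sqrt (s - a)) s := hasDerivAt_Gfun ha hsgta
    have hcomp : HasDerivAt (fun y => Gfun a (1 + u y + W))
        (Real.sqrt s / Real.sqrt (s - a) * u' x) x := by have := hG.comp x hs'; exact this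
    have h6 := (hcomp.const_mul A).sub ((hasDerivAt_id x).const_mul (Real.sqrt lam))
    have key : A * (Real.sqrt s / Real.sqrt (s - a) * u' x) = Real.sqrt lam := by
      have hu'x : 0 < u' x := hu'pos x ⟨hx.1, hx.2.le⟩
      have hen : u' x ^ 2 = lam / a - lam / s := hE x hxI
      have hps : 0 < Real.sqrt s := Real.sqrt_pos.2 hs0
      have hqs : 0 < Real.sqrt (s - a) := Real.sqrt_pos.2 hsa
      have hc0 : 0 ≤ A * (Real.sqrt s / Real.sqrt (s - a) * u' x) := by positivity
      have hc2 : (A * (Real.sqrt s / Real.sqrt (s - a) * u' x)) ^ 2 = lam := by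
        have e1 : A ^ 2 = a := Real.sq_sqrt ha.le
        have e2 : Real.sqrt s ^ 2 = s := Real.sq_sqrt hs0.le
        have e3 : Real.sqrt (s - a) ^ 2 = s - a := Real.sq_sqrt hsa.le
        have expand : (A * (Real.sqrt s / Real.sqrt (s - a) * u' x)) ^ 2
            = A ^ 2 * (Real.sqrt s ^ 2 / Real.sqrt (s - a) ^ 2) * u' x ^ 2 := by ring
        rw [expand, e1, e2, e3, hen]
        field_simp
      rw [← hc2, Real.sqrt_sq hc0]
    rw [hH_def]
    refine h6.congr_deriv ?_
    rw [key]
    ring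
  have hH10 := constOn01 hHc hHd 1 h1I
  -- extract sqrt lam equation
  have hGb : (1:ℝ) + u 1 + W = b := by rw [hu1, hb_def]; ring
  have hGa : (1:ℝ) + u 0 + W = a := by rw [hu0, ha_def]; ring
  have hGaa : Gfun a a = a * (Real.log a / 2) := by
    unfold Gfun
    simp [Real.log_sqrt ha.le]
  have hGba : Gfun a b = Real.sqrt b * Real.sqrt m + a * Real.log (Real.sqrt b + Real.sqrt m) := by
    unfold Gfun
    rw [hba, Real.sqrt_mul hb.le]
  have hsl : Real.sqrt lam
      = A * (Real.sqrt b * Real.sqrt m) + A * a * Real.log (Real.sqrt b + Real.sqrt m)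
        - A * a * (Real.log a / 2) := by
    rw [hH_def] at hH10
    simp only [hGb, hGa, hGba, hGaa] at hH10
    linarith [hH10]
  -- final algebra
  set B := Real.sqrt b with hB_def
  set M := Real.sqrt m with hM_def
  have hB : 0 < B := Real.sqrt_pos.2 hb
  have hM : 0 < M := Real.sqrt_pos.2 hm0
  have hB2 : B ^ 2 = b := Real.sq_sqrt hb.le
  have hM2 : M ^ 2 = m := Real.sq_sqrt hm0.le
  have hA2 : A ^ 2 = a := Real.sq_sqrt ha.le
  have e1mr : 1 - m / b = a / b := by
    rw [ha_def, hb_def]; field_simp; ring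
  clear_value a b A B M
  have esqrtr : Real.sqrt (m / b) = M / B := by
    rw [hM_def, hB_def]; exact Real.sqrt_div hm0.le b
  have esqrtab : Real.sqrt (a / b) = A / B := by
    rw [hA_def, hB_def]; exact Real.sqrt_div ha.le b
  have erpow : (a / b) ^ ((3:ℝ)/2) = (a / b) * (A / B) := by
    rw [show (3:ℝ)/2 = 1 + 1/2 by norm_num, Real.rpow_add (by positivity), Real.rpow_one,
      ← Real.sqrt_eq_rpow, esqrtab]
  have esq1 : Real.sqrt (m / b * (a / b)) = M * A / b := by
    rw [hM_def, hA_def]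
    rw [show m / b * (a / b) = m * a / (b * b) by ring, Real.sqrt_div (by positivity) (b * b),
      Real.sqrt_mul hm0.le, Real.sqrt_mul_self hb.le]
  have elog1 : Real.log (1 + M / B) = Real.log (B + M) - Real.log b / 2 := by
    rw [show 1 + M / B = (B + M) / B by field_simp, Real.log_div (by positivity) hB.ne',
      hB_def, Real.log_sqrt hb.le]
  have elog2 : Real.log (a / b) = Real.log a - Real.log b := Real.log_div ha.ne' hb.ne'
  have hphi : b * B * phi (m / b) = Real.sqrt lam := by
    rw [hsl]
    unfold phi
    rw [e1mr, esqrtr, erpow, esq1, elog1, elog2]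
    rw [← hB2, ← hA2]
    field_simp
    ring
  have : lam = (b * B * phi (m / b)) ^ 2 := by rw [hphi, Real.sq_sqrt hlam.le]
  rw [this]
  have : (b * B * phi (m / b)) ^ 2 = b ^ 2 * B ^ 2 * phi (m / b) ^ 2 := by ring
  rw [this, hB2]
  ring
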